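/- Let $f, g, h$ be functions on $\Omega = M \times (-1,1)$ with $M = (0,L_1)\times(0,L_2)$ for which the following norms are finite. Then $\int_M (\int_{-1}^1 f\,dz)(\int_{-1}^1 g h\,dz)\,dM \le C \|f\|_2^{1/2}(\|f\|_2^{1/2} + \|\nabla f\|_2^{1/2})\|g\|_2\|h\|_2^{1/2}(\|h\|_2^{1/2} + \|\nabla h\|_2^{1/2})$, where $C$ depends only on $L_1, L_2$, norms are $L^2(\Omega)$, and $\nabla = (\partial_x, \partial_y)$. -/

import Mathlib

open MeasureTheory

section AnisotropicHelpers

lemma intOn1 {w : ℝ → ℝ} (hw : Continuous w) {a b : ℝ} :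
    IntegrableOn w (Set.Ioo a b) :=
  (hw.integrableOn_Icc).mono_set Set.Ioo_subset_Icc_self

lemma intOn2 {w : ℝ × ℝ → ℝ} (hw : Continuous w) {a b c d : ℝ} :
    IntegrableOn w (Set.Ioo a b ×ˢ Set.Ioo c d) := by
  have hsub : Set.Ioo a b ×ˢ Set.Ioo c d ⊆ Set.Icc (a, c) (b, d) := by
    rintro ⟨x, y⟩ ⟨hx, hy⟩
    exact ⟨⟨hx.1.le, hy.1.le⟩, ⟨hx.2.le, hy.2.le⟩⟩
  exact ((hw.continuousOn).integrableOn_compact isCompact_Icc).mono_set hsub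

lemma intOn3 {w : ℝ × ℝ × ℝ → ℝ} (hw : Continuous w) {a b c d e e' : ℝ} :
    IntegrableOn w (Set.Ioo a b ×ˢ Set.Ioo c d ×ˢ Set.Ioo e e') := by
  have hsub : Set.Ioo a b ×ˢ Set.Ioo c d ×ˢ Set.Ioo e e' ⊆
      Set.Icc (a, c, e) (b, d, e') := by
    rintro ⟨x, y, z⟩ ⟨hx, hy, hz⟩
    exact ⟨⟨hx.1.le, hy.1.le, hz.1.le⟩, ⟨hx.2.le, hy.2.le, hz.2.le⟩⟩
  exact ((hw.continuousOn).integrableOn_compact isCompact_Icc).mono_set hsub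

lemma iiconv {a b : ℝ} (hab : a ≤ b) (w : ℝ → ℝ) :
    (∫ z in a..b, w z) = ∫ z in Set.Ioo a b, w z := by
  rw [intervalIntegral.integral_of_le hab, MeasureTheory.integral_Ioc_eq_integral_Ioo]

lemma pairSplit {w : ℝ × ℝ → ℝ} (hw : Continuous w) {a b c d : ℝ} :
    ∫ p in Set.Ioo a b ×ˢ Set.Ioo c d, w p
      = ∫ x in Set.Ioo a b, ∫ y in Set.Ioo c d, w (x, y) := by
  rw [Measure.volume_eq_prod, setIntegral_prod]
  rw [← Measure.volume_eq_prod]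
  exact intOn2 hw

lemma tripleSplit {w : ℝ × ℝ × ℝ → ℝ} (hw : Continuous w) {a b c d e e' : ℝ} :
    ∫ p in Set.Ioo a b ×ˢ Set.Ioo c d ×ˢ Set.Ioo e e', w p
      = ∫ x in Set.Ioo a b, ∫ y in Set.Ioo c d, ∫ z in Set.Ioo e e', w (x, y, z) := by
  rw [Measure.volume_eq_prod, setIntegral_prod]
  · refine setIntegral_congr_fun measurableSet_Ioo (fun x _ => ?_)
    exact pairSplit (hw.comp (Continuous.prodMk_right x))
  · rw [← Measure.volume_eq_prod]
    exact intOn3 hw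

lemma iooSwap {w : ℝ → ℝ → ℝ} (hw : Continuous (fun p : ℝ × ℝ => w p.1 p.2))
    {a b c d : ℝ} :
    ∫ s in Set.Ioo a b, ∫ t in Set.Ioo c d, w s t
      = ∫ t in Set.Ioo c d, ∫ s in Set.Ioo a b, w s t := by
  apply MeasureTheory.integral_integral_swap
  rw [Measure.prod_restrict, ← Measure.volume_eq_prod]
  exact intOn2 hw

lemma contParam {X : Type*} [TopologicalSpace X] [FirstCountableTopology X]
    [LocallyCompactSpace X]
    {w : X → ℝ → ℝ} (hw : Continuous (Function.uncurry w)) {a b : ℝ} (hab : a ≤ b) :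
    Continuous (fun q : X => ∫ z in Set.Ioo a b, w q z) := by
  have he : (fun q : X => ∫ z in Set.Ioo a b, w q z) = fun q => ∫ z in a..b, w q z := by
    funext q
    exact (iiconv hab _).symm
  rw [he]
  exact intervalIntegral.continuous_parametric_intervalIntegral_of_continuous' hw a b

lemma myCS {α : Type*} [MeasurableSpace α] (μ : Measure α) (u v : α → ℝ)
    (hu : Integrable (fun a => u a ^ 2) μ) (hv : Integrable (fun a => v a ^ 2) μ)
    (huv : Integrable (fun a => |u a * v a|) μ) :
    ∫ a, |u a * v a| ∂μ ≤
      Real.sqrt (∫ a, u a ^ 2 ∂μ) * Real.sqrt (∫ a, v a ^ 2 ∂μ) := by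
  set A := ∫ a, u a ^ 2 ∂μ with hA
  set B := ∫ a, v a ^ 2 ∂μ with hB
  have hA0 : 0 ≤ A := integral_nonneg fun a => sq_nonneg _
  have hB0 : 0 ≤ B := integral_nonneg fun a => sq_nonneg _
  have hbound : ∀ t : ℝ, 0 < t → (∫ a, |u a * v a| ∂μ) ≤ (t * A + B / t) / 2 := by
    intro t ht
    have hpt : ∀ a, |u a * v a| ≤ (t * u a ^ 2 + v a ^ 2 / t) / 2 := by
      intro a
      rw [abs_mul]
      have h2 : t * (t * u a ^ 2 + v a ^ 2 / t) = t ^ 2 * u a ^ 2 + v a ^ 2 := by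
        field_simp
      nlinarith [sq_nonneg (t * |u a| - |v a|), sq_abs (u a), sq_abs (v a),
        abs_nonneg (u a), abs_nonneg (v a), ht, h2]
    calc ∫ a, |u a * v a| ∂μ
        ≤ ∫ a, (t * u a ^ 2 + v a ^ 2 / t) / 2 ∂μ :=
          integral_mono huv (((hu.const_mul t).add (hv.div_const t)).div_const 2) hpt
      _ = (t * A + B / t) / 2 := by
          rw [integral_div, integral_add (hu.const_mul t) (hv.div_const t),
            integral_const_mul, integral_div]
  rcases eq_or_lt_of_le hA0 with hAeq | hApos
  · have hu0 : (fun a => u a ^ 2) =ᵐ[μ] 0 :=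
      (integral_eq_zero_iff_of_nonneg (fun a => sq_nonneg (u a)) hu).mp hAeq.symm
    have h0 : (fun a => |u a * v a|) =ᵐ[μ] 0 := by
      filter_upwards [hu0] with a ha
      have : u a = 0 := by simpa [pow_eq_zero_iff] using ha
      simp [this]
    rw [integral_congr_ae h0]
    simp
    positivity
  · rcases eq_or_lt_of_le hB0 with hBeq | hBpos
    · have hv0 : (fun a => v a ^ 2) =ᵐ[μ] 0 :=
        (integral_eq_zero_iff_of_nonneg (fun a => sq_nonneg (v a)) hv).mp hBeq.symm
      have h0 : (fun a => |u a * v a|) =ᵐ[μ] 0 := by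
        filter_upwards [hv0] with a ha
        have : v a = 0 := by simpa [pow_eq_zero_iff] using ha
        simp [this]
      rw [integral_congr_ae h0]
      simp
      positivity
    · have hsA : 0 < Real.sqrt A := Real.sqrt_pos.mpr hApos
      have hsB : 0 < Real.sqrt B := Real.sqrt_pos.mpr hBpos
      have ht : 0 < Real.sqrt B / Real.sqrt A := div_pos hsB hsA
      have hmain := hbound _ ht
      have heq : (Real.sqrt B / Real.sqrt A * A + B / (Real.sqrt B / Real.sqrt A)) / 2
          = Real.sqrt A * Real.sqrt B := by
        have ea' : Real.sqrt A * Real.sqrt A = A := Real.mul_self_sqrt hA0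
        have eb' : Real.sqrt B * Real.sqrt B = B := Real.mul_self_sqrt hB0
        field_simp
        linear_combination (-(Real.sqrt B * Real.sqrt B)) * ea'
          - (Real.sqrt A * Real.sqrt A) * eb'
      rw [heq] at hmain
      exact hmain

lemma myCS' {α : Type*} [MeasurableSpace α] (μ : Measure α) (u v : α → ℝ)
    (hu : Integrable (fun a => u a ^ 2) μ) (hv : Integrable (fun a => v a ^ 2) μ)
    (huv : Integrable (fun a => u a * v a) μ) :
    ∫ a, u a * v a ∂μ ≤
      Real.sqrt (∫ a, u a ^ 2 ∂μ) * Real.sqrt (∫ a, v a ^ 2 ∂μ) := by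
  calc ∫ a, u a * v a ∂μ ≤ |∫ a, u a * v a ∂μ| := le_abs_self _
    _ ≤ ∫ a, |u a * v a| ∂μ := by
        simpa [Real.norm_eq_abs, abs_mul] using
          norm_integral_le_integral_norm (μ := μ) (fun a => u a * v a)
    _ ≤ _ := myCS μ u v hu hv huv.abs

lemma oneDim {L : ℝ} (hL : 0 < L) {u u' : ℝ → ℝ}
    (hd : ∀ x, HasDerivAt u (u' x) x) (hu' : Continuous u')
    {x : ℝ} (hx : x ∈ Set.Ioo 0 L) :
    u x ^ 2 ≤ 1 / L * (∫ s in Set.Ioo 0 L, u s ^ 2)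
      + 2 * ∫ s in Set.Ioo 0 L, |u s * u' s| := by
  have hu : Continuous u := by
    have hdiff : Differentiable ℝ u := fun t => (hd t).differentiableAt
    exact hdiff.continuous
  set c : ℝ := 2 * ∫ s in Set.Ioo 0 L, |u s * u' s| with hc
  have habs_cont : Continuous fun t => |2 * u t * u' t| :=
    ((continuous_const.mul hu).mul hu').abs
  have hft : ∀ a b : ℝ, (∫ t in a..b, 2 * u t * u' t) = u b ^ 2 - u a ^ 2 := by
    intro a b
    apply intervalIntegral.integral_eq_sub_of_hasDerivAt
    · intro t _
      have h2 := (hd t).pow 2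
      have he : (2 : ℕ) * u t ^ (2 - 1) * u' t = 2 * u t * u' t := by push_cast; ring
      rwa [he] at h2
    · exact ((continuous_const.mul hu).mul hu').intervalIntegrable _ _
  have hIabs : (∫ t in Set.Ioo 0 L, |2 * u t * u' t|) = c := by
    rw [hc, ← integral_const_mul]
    refine setIntegral_congr_fun measurableSet_Ioo (fun t _ => ?_)
    simp [abs_mul]
    ring
  have hmono : ∀ a b : ℝ, a ∈ Set.Ioo 0 L → b ∈ Set.Ioo 0 L → a ≤ b →
      |∫ t in a..b, 2 * u t * u' t| ≤ c := by
    intro a b ha hb hab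
    have h1 : |∫ t in a..b, 2 * u t * u' t| ≤ ∫ t in a..b, |2 * u t * u' t| :=
      intervalIntegral.abs_integral_le_integral_abs hab
    have h2 : (∫ t in a..b, |2 * u t * u' t|) = ∫ t in Set.Ioo a b, |2 * u t * u' t| := by
      rw [intervalIntegral.integral_of_le hab, MeasureTheory.integral_Ioc_eq_integral_Ioo]
    have h3 : (∫ t in Set.Ioo a b, |2 * u t * u' t|)
        ≤ ∫ t in Set.Ioo 0 L, |2 * u t * u' t| := by
      apply setIntegral_mono_set (intOn1 habs_cont)
      · exact Filter.Eventually.of_forall fun t => abs_nonneg _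
      · exact HasSubset.Subset.eventuallyLE (Set.Ioo_subset_Ioo ha.1.le hb.2.le)
    rw [h2] at h1
    rw [hIabs] at h3
    linarith
  have key : ∀ s ∈ Set.Ioo 0 L, u x ^ 2 ≤ u s ^ 2 + c := by
    intro s hs
    have habs : |u x ^ 2 - u s ^ 2| ≤ c := by
      rw [← hft s x]
      rcases le_total s x with hsx | hsx
      · exact hmono s x hs hx hsx
      · rw [intervalIntegral.integral_symm, abs_neg]
        exact hmono x s hx hs hsx
    have hle := le_abs_self (u x ^ 2 - u s ^ 2)
    linarith
  have hIoo : (volume (Set.Ioo (0 : ℝ) L)).toReal = L := by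
    rw [Real.volume_Ioo, ENNReal.toReal_ofReal (by linarith)]
    simp
  have hconst : (∫ _ in Set.Ioo (0 : ℝ) L, u x ^ 2) = L * u x ^ 2 := by
    rw [setIntegral_const, measureReal_def, hIoo, smul_eq_mul]
  have hfin : volume (Set.Ioo (0 : ℝ) L) < ⊤ := by
    rw [Real.volume_Ioo]; exact ENNReal.ofReal_lt_top
  have hint2 : (∫ s in Set.Ioo (0 : ℝ) L, (u s ^ 2 + c))
      = (∫ s in Set.Ioo (0 : ℝ) L, u s ^ 2) + L * c := by
    rw [integral_add (intOn1 (w := fun s => u s ^ 2) (hu.pow 2)) (integrableOn_const hfin.ne)]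
    rw [setIntegral_const, measureReal_def, hIoo, smul_eq_mul]
  have hImono : (∫ _ in Set.Ioo (0 : ℝ) L, u x ^ 2)
      ≤ ∫ s in Set.Ioo (0 : ℝ) L, (u s ^ 2 + c) := by
    apply setIntegral_mono_on
    · exact integrableOn_const hfin.ne
    · exact (intOn1 (hu.pow 2)).add (integrableOn_const hfin.ne)
    · exact measurableSet_Ioo
    · exact key
  rw [hconst, hint2] at hImono
  have hL' : (0 : ℝ) < 1 / L := by positivity
  have hmul := mul_le_mul_of_nonneg_left hImono hL'.le
  have hLL : 1 / L * L = 1 := by field_simp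
  calc u x ^ 2 = 1 / L * (L * u x ^ 2) := by rw [← mul_assoc, hLL, one_mul]
    _ ≤ 1 / L * ((∫ s in Set.Ioo 0 L, u s ^ 2) + L * c) := hmul
    _ = 1 / L * (∫ s in Set.Ioo 0 L, u s ^ 2) + c := by
        rw [mul_add, ← mul_assoc, hLL, one_mul]


lemma genIneq {c k a d : ℝ} (hc : 0 ≤ c) (hk : 0 ≤ k) (ha : 0 ≤ a) (hd : 0 ≤ d) :
    c * (a ^ 2 * a ^ 2) + k * (a ^ 2 * d ^ 2) ≤ (c + k) * (a ^ 2 * (a + d) ^ 2) := by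
  nlinarith [mul_nonneg hc (mul_nonneg (mul_nonneg (mul_nonneg ha ha) ha) hd),
    mul_nonneg hc (mul_nonneg (mul_nonneg ha ha) (mul_nonneg hd hd)),
    mul_nonneg hk (mul_nonneg (mul_nonneg ha ha) (mul_nonneg ha ha)),
    mul_nonneg hk (mul_nonneg (mul_nonneg (mul_nonneg ha ha) ha) hd)]

lemma contParamP {w : ℝ × ℝ → ℝ} (hw : Continuous w) {a b : ℝ} (hab : a ≤ b) :
    Continuous (fun q : ℝ => ∫ z in Set.Ioo a b, w (q, z)) :=
  contParam (w := fun q z => w (q, z)) (by fun_prop) hab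

lemma reorder1 {L1 L2 : ℝ} {w : ℝ × ℝ × ℝ → ℝ} (hw : Continuous w) :
    (∫ y in Set.Ioo 0 L2, ∫ z in Set.Ioo (-1 : ℝ) 1, ∫ x in Set.Ioo 0 L1, w (x, y, z))
      = ∫ p in Set.Ioo 0 L1 ×ˢ Set.Ioo 0 L2 ×ˢ Set.Ioo (-1 : ℝ) 1, w p := by
  have h1 : ∀ y : ℝ, (∫ z in Set.Ioo (-1 : ℝ) 1, ∫ x in Set.Ioo 0 L1, w (x, y, z))
      = ∫ x in Set.Ioo 0 L1, ∫ z in Set.Ioo (-1 : ℝ) 1, w (x, y, z) := fun y =>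
    (iooSwap (w := fun x z => w (x, y, z)) (by fun_prop)).symm
  have hc : Continuous fun p : ℝ × ℝ => ∫ z in Set.Ioo (-1 : ℝ) 1, w (p.2, p.1, z) :=
    contParam (w := fun (p : ℝ × ℝ) z => w (p.2, p.1, z)) (by fun_prop) (by norm_num)
  calc ∫ y in Set.Ioo 0 L2, ∫ z in Set.Ioo (-1 : ℝ) 1, ∫ x in Set.Ioo 0 L1, w (x, y, z)
      = ∫ y in Set.Ioo 0 L2, ∫ x in Set.Ioo 0 L1, ∫ z in Set.Ioo (-1 : ℝ) 1, w (x, y, z) :=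
        setIntegral_congr_fun measurableSet_Ioo (fun y (_ : y ∈ Set.Ioo 0 L2) => h1 y)
    _ = ∫ x in Set.Ioo 0 L1, ∫ y in Set.Ioo 0 L2, ∫ z in Set.Ioo (-1 : ℝ) 1, w (x, y, z) :=
        iooSwap (w := fun y x => ∫ z in Set.Ioo (-1 : ℝ) 1, w (x, y, z)) hc
    _ = _ := (tripleSplit hw).symm

lemma reorder2 {L1 L2 : ℝ} {w : ℝ × ℝ × ℝ → ℝ} (hw : Continuous w) :
    (∫ x in Set.Ioo 0 L1, ∫ z in Set.Ioo (-1 : ℝ) 1, ∫ t in Set.Ioo 0 L2, w (x, t, z))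
      = ∫ p in Set.Ioo 0 L1 ×ˢ Set.Ioo 0 L2 ×ˢ Set.Ioo (-1 : ℝ) 1, w p := by
  have h1 : ∀ x : ℝ, (∫ z in Set.Ioo (-1 : ℝ) 1, ∫ t in Set.Ioo 0 L2, w (x, t, z))
      = ∫ t in Set.Ioo 0 L2, ∫ z in Set.Ioo (-1 : ℝ) 1, w (x, t, z) := fun x =>
    iooSwap (w := fun z t => w (x, t, z)) (by fun_prop)
  calc ∫ x in Set.Ioo 0 L1, ∫ z in Set.Ioo (-1 : ℝ) 1, ∫ t in Set.Ioo 0 L2, w (x, t, z)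
      = ∫ x in Set.Ioo 0 L1, ∫ t in Set.Ioo 0 L2, ∫ z in Set.Ioo (-1 : ℝ) 1, w (x, t, z) :=
        setIntegral_congr_fun measurableSet_Ioo (fun x (_ : x ∈ Set.Ioo 0 L1) => h1 x)
    _ = _ := (tripleSplit hw).symm

lemma reorder3 {L1 L2 : ℝ} {w : ℝ × ℝ × ℝ → ℝ} (hw : Continuous w) :
    (∫ y in Set.Ioo 0 L2, ∫ x in Set.Ioo 0 L1, ∫ z in Set.Ioo (-1 : ℝ) 1, w (x, y, z))
      = ∫ p in Set.Ioo 0 L1 ×ˢ Set.Ioo 0 L2 ×ˢ Set.Ioo (-1 : ℝ) 1, w p := by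
  have hc : Continuous fun p : ℝ × ℝ => ∫ z in Set.Ioo (-1 : ℝ) 1, w (p.2, p.1, z) :=
    contParam (w := fun (p : ℝ × ℝ) z => w (p.2, p.1, z)) (by fun_prop) (by norm_num)
  calc ∫ y in Set.Ioo 0 L2, ∫ x in Set.Ioo 0 L1, ∫ z in Set.Ioo (-1 : ℝ) 1, w (x, y, z)
      = ∫ x in Set.Ioo 0 L1, ∫ y in Set.Ioo 0 L2, ∫ z in Set.Ioo (-1 : ℝ) 1, w (x, y, z) :=
        iooSwap (w := fun y x => ∫ z in Set.Ioo (-1 : ℝ) 1, w (x, y, z)) hc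
    _ = _ := (tripleSplit hw).symm

end AnisotropicHelpers

set_option maxHeartbeats 1000000 in
/-- The anisotropic Ladyzhenskaya-type inequality on the thin domain (Lemma 2.1). -/
theorem anisotropic_ladyzhenskaya (L1 L2 : ℝ) (hL1 : 0 < L1) (hL2 : 0 < L2) :
    ∃ C : ℝ, 0 < C ∧
      ∀ f g h : ℝ × ℝ × ℝ → ℝ, ContDiff ℝ 1 f → ContDiff ℝ 1 g → ContDiff ℝ 1 h →
        (let Ω : Set (ℝ × ℝ × ℝ) :=
          Set.Ioo 0 L1 ×ˢ Set.Ioo 0 L2 ×ˢ Set.Ioo (-1 : ℝ) 1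
        let M : Set (ℝ × ℝ) := Set.Ioo 0 L1 ×ˢ Set.Ioo 0 L2
        let n2 : (ℝ × ℝ × ℝ → ℝ) → ℝ := fun w =>
          Real.sqrt (∫ p in Ω, (w p) ^ 2)
        let ngrad : (ℝ × ℝ × ℝ → ℝ) → ℝ := fun w =>
          Real.sqrt (∫ p in Ω,
            ((fderiv ℝ w p (1, 0, 0)) ^ 2 + (fderiv ℝ w p (0, 1, 0)) ^ 2))
        (∫ q in M, (∫ z in (-1 : ℝ)..1, f (q.1, q.2, z)) *
            (∫ z in (-1 : ℝ)..1, g (q.1, q.2, z) * h (q.1, q.2, z))) ≤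
          C * Real.sqrt (n2 f) * (Real.sqrt (n2 f) + Real.sqrt (ngrad f)) *
            n2 g * Real.sqrt (n2 h) * (Real.sqrt (n2 h) + Real.sqrt (ngrad h))) := by
  refine ⟨Real.sqrt (2 / L1 + 4) * Real.sqrt (1 / L2 + 2), by positivity, ?_⟩
  intro f g h hf hg hh
  dsimp only
  -- continuity of the functions and their partial derivatives
  have hfc : Continuous f := hf.continuous
  have hgc : Continuous g := hg.continuous
  have hhc : Continuous h := hh.continuous
  have hfx_cont : Continuous (fun p : ℝ × ℝ × ℝ => fderiv ℝ f p (1, 0, 0)) :=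
    (hf.continuous_fderiv one_ne_zero).clm_apply continuous_const
  have hfy_cont : Continuous (fun p : ℝ × ℝ × ℝ => fderiv ℝ f p (0, 1, 0)) :=
    (hf.continuous_fderiv one_ne_zero).clm_apply continuous_const
  have hhx_cont : Continuous (fun p : ℝ × ℝ × ℝ => fderiv ℝ h p (1, 0, 0)) :=
    (hh.continuous_fderiv one_ne_zero).clm_apply continuous_const
  have hhy_cont : Continuous (fun p : ℝ × ℝ × ℝ => fderiv ℝ h p (0, 1, 0)) :=
    (hh.continuous_fderiv one_ne_zero).clm_apply continuous_const
  -- partial derivatives as one-dimensional derivatives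
  have hfd : ∀ y z x : ℝ,
      HasDerivAt (fun x' => f (x', y, z)) (fderiv ℝ f (x, y, z) (1, 0, 0)) x := by
    intro y z x
    have h1 : HasDerivAt (fun x' : ℝ => (x', y, z)) ((1 : ℝ), (0 : ℝ), (0 : ℝ)) x :=
      HasDerivAt.prodMk (hasDerivAt_id x) (hasDerivAt_const x ((y : ℝ), (z : ℝ)))
    exact ((hf.differentiable one_ne_zero (x, y, z)).hasFDerivAt.comp_hasDerivAt x h1)
  have hhd : ∀ x z y : ℝ,
      HasDerivAt (fun y' => h (x, y', z)) (fderiv ℝ h (x, y, z) (0, 1, 0)) y := by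
    intro x z y
    have h1 : HasDerivAt (fun y' : ℝ => (x, y', z)) ((0 : ℝ), (1 : ℝ), (0 : ℝ)) y :=
      HasDerivAt.prodMk (hasDerivAt_const y (x : ℝ)) (HasDerivAt.prodMk (hasDerivAt_id y) (hasDerivAt_const y (z : ℝ)))
    exact ((hh.differentiable one_ne_zero (x, y, z)).hasFDerivAt.comp_hasDerivAt y h1)
  -- abbreviations for the five basic integrals
  set A := ∫ p in Set.Ioo 0 L1 ×ˢ Set.Ioo 0 L2 ×ˢ Set.Ioo (-1 : ℝ) 1, f p ^ 2 with hAdef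
  set DA := ∫ p in Set.Ioo 0 L1 ×ˢ Set.Ioo 0 L2 ×ˢ Set.Ioo (-1 : ℝ) 1,
      (fderiv ℝ f p (1, 0, 0) ^ 2 + fderiv ℝ f p (0, 1, 0) ^ 2) with hDAdef
  set Gg := ∫ p in Set.Ioo 0 L1 ×ˢ Set.Ioo 0 L2 ×ˢ Set.Ioo (-1 : ℝ) 1, g p ^ 2 with hGgdef
  set Bh := ∫ p in Set.Ioo 0 L1 ×ˢ Set.Ioo 0 L2 ×ˢ Set.Ioo (-1 : ℝ) 1, h p ^ 2 with hBhdef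
  set DB := ∫ p in Set.Ioo 0 L1 ×ˢ Set.Ioo 0 L2 ×ˢ Set.Ioo (-1 : ℝ) 1,
      (fderiv ℝ h p (1, 0, 0) ^ 2 + fderiv ℝ h p (0, 1, 0) ^ 2) with hDBdef
  -- auxiliary functions
  set W : ℝ × ℝ → ℝ := fun yz =>
    1 / L1 * (∫ x in Set.Ioo 0 L1, f (x, yz.1, yz.2) ^ 2)
      + 2 * ∫ x in Set.Ioo 0 L1, |f (x, yz.1, yz.2) * fderiv ℝ f (x, yz.1, yz.2) (1, 0, 0)|
    with hWdef
  set Wh : ℝ × ℝ → ℝ := fun xz =>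
    1 / L2 * (∫ t in Set.Ioo 0 L2, h (xz.1, t, xz.2) ^ 2)
      + 2 * ∫ t in Set.Ioo 0 L2, |h (xz.1, t, xz.2) * fderiv ℝ h (xz.1, t, xz.2) (0, 1, 0)|
    with hWhdef
  set G2 : ℝ × ℝ → ℝ := fun q => ∫ z in Set.Ioo (-1 : ℝ) 1, g (q.1, q.2, z) ^ 2 with hG2def
  set H2 : ℝ × ℝ → ℝ := fun q => ∫ z in Set.Ioo (-1 : ℝ) 1, h (q.1, q.2, z) ^ 2 with hH2def
  set Aa : ℝ → ℝ := fun y => ∫ z in Set.Ioo (-1 : ℝ) 1, W (y, z) with hAadef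
  set Kg : ℝ → ℝ := fun y => ∫ x in Set.Ioo 0 L1, G2 (x, y) with hKgdef
  set Bb : ℝ := 1 / L2 * Bh
      + 2 * ∫ p in Set.Ioo 0 L1 ×ˢ Set.Ioo 0 L2 ×ˢ Set.Ioo (-1 : ℝ) 1,
          |h p * fderiv ℝ h p (0, 1, 0)| with hBbdef
  -- continuity facts
  have hm1 : (-1 : ℝ) ≤ 1 := by norm_num
  have hWcont : Continuous W := by
    rw [hWdef]
    apply Continuous.add
    · exact continuous_const.mul (contParam (by fun_prop) hL1.le)
    · apply continuous_const.mul
      apply contParam (a := 0) (b := L1) ?_ hL1.le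
      apply Continuous.abs
      apply Continuous.mul
      · fun_prop
      · exact hfx_cont.comp (by fun_prop)
  have hWhcont : Continuous Wh := by
    rw [hWhdef]
    apply Continuous.add
    · exact continuous_const.mul (contParam (by fun_prop) hL2.le)
    · apply continuous_const.mul
      apply contParam (a := 0) (b := L2) ?_ hL2.le
      apply Continuous.abs
      apply Continuous.mul
      · fun_prop
      · exact hhy_cont.comp (by fun_prop)
  have hG2cont : Continuous G2 := by
    rw [hG2def]; exact contParam (by fun_prop) hm1
  have hH2cont : Continuous H2 := by
    rw [hH2def]; exact contParam (by fun_prop) hm1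
  have hAacont : Continuous Aa := by
    rw [hAadef]
    exact contParam (w := fun y z => W (y, z)) (by fun_prop) hm1
  have hKgcont : Continuous Kg := by
    rw [hKgdef]
    have : Continuous (Function.uncurry fun (y x : ℝ) => G2 (x, y)) := by fun_prop
    exact contParam this hL1.le
  have hFcont : Continuous (fun q : ℝ × ℝ => ∫ z in (-1 : ℝ)..1, f (q.1, q.2, z)) := by
    apply intervalIntegral.continuous_parametric_intervalIntegral_of_continuous'
    fun_prop
  have hPcont : Continuous
      (fun q : ℝ × ℝ => ∫ z in (-1 : ℝ)..1, g (q.1, q.2, z) * h (q.1, q.2, z)) := by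
    apply intervalIntegral.continuous_parametric_intervalIntegral_of_continuous'
    fun_prop
  have hWhIcont : Continuous (fun x : ℝ => ∫ z in Set.Ioo (-1 : ℝ) 1, Wh (x, z)) :=
    contParam (w := fun x z => Wh (x, z)) (by fun_prop) hm1
  -- nonnegativity facts
  have hAnn : 0 ≤ A := by rw [hAdef]; exact integral_nonneg fun p => sq_nonneg _
  have hDAnn : 0 ≤ DA := by
    rw [hDAdef]
    exact integral_nonneg fun p => add_nonneg (sq_nonneg _) (sq_nonneg _)
  have hGgnn : 0 ≤ Gg := by rw [hGgdef]; exact integral_nonneg fun p => sq_nonneg _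
  have hBhnn : 0 ≤ Bh := by rw [hBhdef]; exact integral_nonneg fun p => sq_nonneg _
  have hDBnn : 0 ≤ DB := by
    rw [hDBdef]
    exact integral_nonneg fun p => add_nonneg (sq_nonneg _) (sq_nonneg _)
  have hG2nn : ∀ q, 0 ≤ G2 q := by
    intro q; rw [hG2def]; exact integral_nonneg fun z => sq_nonneg _
  have hH2nn : ∀ q, 0 ≤ H2 q := by
    intro q; rw [hH2def]; exact integral_nonneg fun z => sq_nonneg _
  have hWnn : ∀ yz, 0 ≤ W yz := by
    intro yz
    rw [hWdef]
    apply add_nonneg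
    · exact mul_nonneg (by positivity) (integral_nonneg fun x => sq_nonneg _)
    · exact mul_nonneg (by norm_num) (integral_nonneg fun x => abs_nonneg _)
  have hWhnn : ∀ xz, 0 ≤ Wh xz := by
    intro xz
    rw [hWhdef]
    apply add_nonneg
    · exact mul_nonneg (by positivity) (integral_nonneg fun t => sq_nonneg _)
    · exact mul_nonneg (by norm_num) (integral_nonneg fun t => abs_nonneg _)
  have hAann : ∀ y, 0 ≤ Aa y := by
    intro y; rw [hAadef]; exact integral_nonneg fun z => hWnn _
  have hKgnn : ∀ y, 0 ≤ Kg y := by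
    intro y; rw [hKgdef]; exact integral_nonneg fun x => hG2nn _
  have hBbnn : 0 ≤ Bb := by
    rw [hBbdef]
    apply add_nonneg
    · exact mul_nonneg (by positivity) hBhnn
    · exact mul_nonneg (by norm_num) (integral_nonneg fun p => abs_nonneg _)
  -- pointwise bound P3 (Cauchy-Schwarz in z)
  have hP3 : ∀ x y : ℝ, |∫ z in (-1 : ℝ)..1, g (x, y, z) * h (x, y, z)|
      ≤ Real.sqrt (G2 (x, y)) * Real.sqrt (H2 (x, y)) := by
    intro x y
    rw [iiconv hm1]
    have h1 : |∫ z in Set.Ioo (-1 : ℝ) 1, g (x, y, z) * h (x, y, z)|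
        ≤ ∫ z in Set.Ioo (-1 : ℝ) 1, |g (x, y, z) * h (x, y, z)| := by
      simpa only [Real.norm_eq_abs] using
        norm_integral_le_integral_norm (μ := volume.restrict (Set.Ioo (-1 : ℝ) 1))
          (fun z => g (x, y, z) * h (x, y, z))
    refine h1.trans ?_
    have h2 := myCS (volume.restrict (Set.Ioo (-1 : ℝ) 1))
      (fun z => g (x, y, z)) (fun z => h (x, y, z))
      (intOn1 (by fun_prop)) (intOn1 (by fun_prop)) (intOn1 (by fun_prop))
    rw [hG2def, hH2def]
    exact h2
  -- pointwise bound P1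
  have hP1 : ∀ x ∈ Set.Ioo 0 L1, ∀ y : ℝ,
      (∫ z in (-1 : ℝ)..1, f (x, y, z)) ^ 2 ≤ 2 * Aa y := by
    intro x hx y
    rw [iiconv hm1]
    have hfz_cont : Continuous fun z => f (x, y, z) := by fun_prop
    have h12 : (∫ z in Set.Ioo (-1 : ℝ) 1, f (x, y, z)) ^ 2
        ≤ 2 * ∫ z in Set.Ioo (-1 : ℝ) 1, f (x, y, z) ^ 2 := by
      have h1 : |∫ z in Set.Ioo (-1 : ℝ) 1, f (x, y, z)|
          ≤ ∫ z in Set.Ioo (-1 : ℝ) 1, |f (x, y, z) * 1| := by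
        simpa [Real.norm_eq_abs] using
          norm_integral_le_integral_norm (μ := volume.restrict (Set.Ioo (-1 : ℝ) 1))
            (fun z => f (x, y, z))
      have h2 := myCS (volume.restrict (Set.Ioo (-1 : ℝ) 1))
        (fun z => f (x, y, z)) (fun _ => (1 : ℝ))
        (intOn1 (hfz_cont.pow 2)) (intOn1 (continuous_const.pow 2))
        (intOn1 ((hfz_cont.mul continuous_const).abs))
      have h3 : (∫ _ in Set.Ioo (-1 : ℝ) 1, ((1 : ℝ)) ^ 2) = 2 := by
        simp [Real.volume_Ioo]
        norm_num
      rw [h3] at h2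
      have h4 : |∫ z in Set.Ioo (-1 : ℝ) 1, f (x, y, z)|
          ≤ Real.sqrt (∫ z in Set.Ioo (-1 : ℝ) 1, f (x, y, z) ^ 2) * Real.sqrt 2 :=
        h1.trans h2
      calc (∫ z in Set.Ioo (-1 : ℝ) 1, f (x, y, z)) ^ 2
          = |∫ z in Set.Ioo (-1 : ℝ) 1, f (x, y, z)| ^ 2 := (sq_abs _).symm
        _ ≤ (Real.sqrt (∫ z in Set.Ioo (-1 : ℝ) 1, f (x, y, z) ^ 2) * Real.sqrt 2) ^ 2 :=
            pow_le_pow_left₀ (abs_nonneg _) h4 2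
        _ = 2 * ∫ z in Set.Ioo (-1 : ℝ) 1, f (x, y, z) ^ 2 := by
            rw [mul_pow, Real.sq_sqrt (integral_nonneg fun z => sq_nonneg _),
              Real.sq_sqrt (by norm_num : (0 : ℝ) ≤ 2)]
            ring
    have hWb : (∫ z in Set.Ioo (-1 : ℝ) 1, f (x, y, z) ^ 2) ≤ Aa y := by
      rw [hAadef]
      apply setIntegral_mono_on (intOn1 (hfz_cont.pow 2))
        (intOn1 (hWcont.comp (by fun_prop))) measurableSet_Ioo
      intro z _
      have hod := oneDim hL1 (u := fun t => f (t, y, z))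
        (u' := fun t => fderiv ℝ f (t, y, z) (1, 0, 0))
        (fun t => hfd y z t) (hfx_cont.comp (by fun_prop)) hx
      rw [hWdef]
      exact hod
    nlinarith [h12, hWb]
  -- pointwise bound P2
  have hP2 : ∀ y ∈ Set.Ioo 0 L2, (∫ x in Set.Ioo 0 L1, H2 (x, y)) ≤ Bb := by
    intro y hy
    have hzbound : ∀ x : ℝ, H2 (x, y) ≤ ∫ z in Set.Ioo (-1 : ℝ) 1, Wh (x, z) := by
      intro x
      rw [hH2def]
      apply setIntegral_mono_on (intOn1 (by fun_prop))
        (intOn1 (hWhcont.comp (by fun_prop))) measurableSet_Ioo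
      intro z _
      have hod := oneDim hL2 (u := fun t => h (x, t, z))
        (u' := fun t => fderiv ℝ h (x, t, z) (0, 1, 0))
        (fun t => hhd x z t) (hhy_cont.comp (by fun_prop)) hy
      rw [hWhdef]
      exact hod
    have hxmono : (∫ x in Set.Ioo 0 L1, H2 (x, y))
        ≤ ∫ x in Set.Ioo 0 L1, ∫ z in Set.Ioo (-1 : ℝ) 1, Wh (x, z) := by
      apply setIntegral_mono_on (intOn1 (hH2cont.comp (by fun_prop)))
        (intOn1 hWhIcont) measurableSet_Ioo
      intro x _
      exact hzbound x
    refine hxmono.trans ?_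
    have hsplit1 : ∀ x : ℝ, (∫ z in Set.Ioo (-1 : ℝ) 1, Wh (x, z))
        = 1 / L2 * (∫ z in Set.Ioo (-1 : ℝ) 1, ∫ t in Set.Ioo 0 L2, h (x, t, z) ^ 2)
          + 2 * ∫ z in Set.Ioo (-1 : ℝ) 1, ∫ t in Set.Ioo 0 L2,
              |h (x, t, z) * fderiv ℝ h (x, t, z) (0, 1, 0)| := by
      intro x
      rw [hWhdef]
      rw [integral_add (Integrable.const_mul (intOn1 (contParam (by fun_prop) hL2.le)) _)
        (Integrable.const_mul (intOn1 (contParam (w := fun z t =>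
          |h (x, t, z) * fderiv ℝ h (x, t, z) (0, 1, 0)|) (by
            apply Continuous.abs
            apply Continuous.mul
            · fun_prop
            · exact hhy_cont.comp (by fun_prop)) hL2.le)) _)]
      rw [integral_const_mul, integral_const_mul]
    rw [setIntegral_congr_fun measurableSet_Ioo (fun x (_ : x ∈ Set.Ioo 0 L1) => hsplit1 x)]
    have habs_cont : Continuous fun p : ℝ × ℝ × ℝ => |h p * fderiv ℝ h p (0, 1, 0)| :=
      (hhc.mul hhy_cont).abs
    rw [integral_add
      (Integrable.const_mul (intOn1 (contParam (w := fun x z =>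
        ∫ t in Set.Ioo 0 L2, h (x, t, z) ^ 2) (contParam (by fun_prop) hL2.le) hm1)) _)
      (Integrable.const_mul (intOn1 (contParam (w := fun x z =>
        ∫ t in Set.Ioo 0 L2, |h (x, t, z) * fderiv ℝ h (x, t, z) (0, 1, 0)|)
        (contParam (w := fun (p : ℝ × ℝ) t =>
          |h (p.1, t, p.2) * fderiv ℝ h (p.1, t, p.2) (0, 1, 0)|)
          (habs_cont.comp (by fun_prop)) hL2.le) hm1)) _)]
    rw [integral_const_mul, integral_const_mul]
    beta_reduce
    rw [reorder2 (w := fun p => h p ^ 2) (hhc.pow 2), reorder2 habs_cont]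
  -- main chain
  set Φ : ℝ × ℝ → ℝ := fun q =>
    Real.sqrt (2 * Aa q.2) * (Real.sqrt (G2 q) * Real.sqrt (H2 q)) with hPhidef
  have hPhicont : Continuous Φ := by
    rw [hPhidef]
    exact ((Real.continuous_sqrt.comp (continuous_const.mul (hAacont.comp continuous_snd))).mul
      ((Real.continuous_sqrt.comp hG2cont).mul (Real.continuous_sqrt.comp hH2cont)))
  have hstep1 : (∫ q in Set.Ioo 0 L1 ×ˢ Set.Ioo 0 L2,
      (∫ z in (-1 : ℝ)..1, f (q.1, q.2, z)) *
        (∫ z in (-1 : ℝ)..1, g (q.1, q.2, z) * h (q.1, q.2, z)))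
      ≤ ∫ q in Set.Ioo 0 L1 ×ˢ Set.Ioo 0 L2, Φ q := by
    have h0 := norm_integral_le_integral_norm
      (μ := volume.restrict (Set.Ioo 0 L1 ×ˢ Set.Ioo 0 L2))
      (fun q : ℝ × ℝ => (∫ z in (-1 : ℝ)..1, f (q.1, q.2, z)) *
        (∫ z in (-1 : ℝ)..1, g (q.1, q.2, z) * h (q.1, q.2, z)))
    simp only [Real.norm_eq_abs] at h0
    refine (le_abs_self _).trans (h0.trans ?_)
    apply setIntegral_mono_on
    · exact intOn2 ((hFcont.mul hPcont).abs)
    · exact intOn2 hPhicont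
    · exact (measurableSet_Ioo.prod measurableSet_Ioo)
    · rintro ⟨x, y⟩ ⟨hx, hy⟩
      simp only [hPhidef]
      rw [abs_mul]
      have hFb : |∫ z in (-1 : ℝ)..1, f (x, y, z)| ≤ Real.sqrt (2 * Aa y) := by
        rw [← Real.sqrt_sq_eq_abs]
        exact Real.sqrt_le_sqrt (hP1 x hx y)
      exact mul_le_mul hFb (hP3 x y) (abs_nonneg _) (Real.sqrt_nonneg _)
  have hstep2 : (∫ q in Set.Ioo 0 L1 ×ˢ Set.Ioo 0 L2, Φ q)
      = ∫ y in Set.Ioo 0 L2, ∫ x in Set.Ioo 0 L1, Φ (x, y) := by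
    rw [pairSplit hPhicont]
    exact iooSwap (w := fun x y => Φ (x, y)) hPhicont
  have hinner : ∀ y ∈ Set.Ioo 0 L2, (∫ x in Set.Ioo 0 L1, Φ (x, y))
      ≤ Real.sqrt Bb * (Real.sqrt (2 * Aa y) * Real.sqrt (Kg y)) := by
    intro y hy
    have hCS := myCS' (volume.restrict (Set.Ioo 0 L1))
      (fun x => Real.sqrt (G2 (x, y))) (fun x => Real.sqrt (H2 (x, y)))
      (intOn1 ((Real.continuous_sqrt.comp (hG2cont.comp (by fun_prop))).pow 2))
      (intOn1 ((Real.continuous_sqrt.comp (hH2cont.comp (by fun_prop))).pow 2))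
      (intOn1 ((Real.continuous_sqrt.comp (hG2cont.comp (by fun_prop))).mul
        (Real.continuous_sqrt.comp (hH2cont.comp (by fun_prop)))))
    have eG : (∫ x in Set.Ioo 0 L1, Real.sqrt (G2 (x, y)) ^ 2) = Kg y := by
      rw [hKgdef]
      exact setIntegral_congr_fun measurableSet_Ioo fun x _ => Real.sq_sqrt (hG2nn _)
    have eH : (∫ x in Set.Ioo 0 L1, Real.sqrt (H2 (x, y)) ^ 2)
        = ∫ x in Set.Ioo 0 L1, H2 (x, y) :=
      setIntegral_congr_fun measurableSet_Ioo fun x _ => Real.sq_sqrt (hH2nn _)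
    rw [eG, eH] at hCS
    have hH2B : Real.sqrt (∫ x in Set.Ioo 0 L1, H2 (x, y)) ≤ Real.sqrt Bb :=
      Real.sqrt_le_sqrt (hP2 y hy)
    have e1 : (∫ x in Set.Ioo 0 L1, Φ (x, y))
        = Real.sqrt (2 * Aa y) * ∫ x in Set.Ioo 0 L1,
            Real.sqrt (G2 (x, y)) * Real.sqrt (H2 (x, y)) := by
      simp only [hPhidef]
      rw [integral_const_mul]
    rw [e1]
    calc Real.sqrt (2 * Aa y) * ∫ x in Set.Ioo 0 L1,
            Real.sqrt (G2 (x, y)) * Real.sqrt (H2 (x, y))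
        ≤ Real.sqrt (2 * Aa y) * (Real.sqrt (Kg y)
            * Real.sqrt (∫ x in Set.Ioo 0 L1, H2 (x, y))) :=
          mul_le_mul_of_nonneg_left hCS (Real.sqrt_nonneg _)
      _ ≤ Real.sqrt (2 * Aa y) * (Real.sqrt (Kg y) * Real.sqrt Bb) := by
          apply mul_le_mul_of_nonneg_left
            (mul_le_mul_of_nonneg_left hH2B (Real.sqrt_nonneg _)) (Real.sqrt_nonneg _)
      _ = Real.sqrt Bb * (Real.sqrt (2 * Aa y) * Real.sqrt (Kg y)) := by ring
  have hInnerCont : Continuous fun y : ℝ => ∫ x in Set.Ioo 0 L1, Φ (x, y) :=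
    contParam (w := fun y x => Φ (x, y)) (hPhicont.comp (by fun_prop)) hL1.le
  have hstep3 : (∫ y in Set.Ioo 0 L2, ∫ x in Set.Ioo 0 L1, Φ (x, y))
      ≤ ∫ y in Set.Ioo 0 L2,
          Real.sqrt Bb * (Real.sqrt (2 * Aa y) * Real.sqrt (Kg y)) := by
    apply setIntegral_mono_on (intOn1 hInnerCont)
      (intOn1 (continuous_const.mul
        ((Real.continuous_sqrt.comp (continuous_const.mul hAacont)).mul
          (Real.continuous_sqrt.comp hKgcont)))) measurableSet_Ioo
    exact hinner
  have hCSy := myCS' (volume.restrict (Set.Ioo 0 L2))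
    (fun y => Real.sqrt (2 * Aa y)) (fun y => Real.sqrt (Kg y))
    (intOn1 ((Real.continuous_sqrt.comp (continuous_const.mul hAacont)).pow 2))
    (intOn1 ((Real.continuous_sqrt.comp hKgcont).pow 2))
    (intOn1 ((Real.continuous_sqrt.comp (continuous_const.mul hAacont)).mul
      (Real.continuous_sqrt.comp hKgcont)))
  have e2A : (∫ y in Set.Ioo 0 L2, Real.sqrt (2 * Aa y) ^ 2)
      = ∫ y in Set.Ioo 0 L2, 2 * Aa y :=
    setIntegral_congr_fun measurableSet_Ioo fun y _ =>
      Real.sq_sqrt (mul_nonneg (by norm_num) (hAann y))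
  have eKg2 : (∫ y in Set.Ioo 0 L2, Real.sqrt (Kg y) ^ 2)
      = ∫ y in Set.Ioo 0 L2, Kg y :=
    setIntegral_congr_fun measurableSet_Ioo fun y _ => Real.sq_sqrt (hKgnn y)
  rw [e2A, eKg2] at hCSy
  -- computation of the three integrals
  have ekg : (∫ y in Set.Ioo 0 L2, Kg y) = Gg := by
    simp only [hKgdef, hG2def]
    rw [reorder3 (w := fun p => g p ^ 2) (hgc.pow 2)]
  have hsplitA : (∫ y in Set.Ioo 0 L2, Aa y)
      = 1 / L1 * A + 2 * ∫ p in Set.Ioo 0 L1 ×ˢ Set.Ioo 0 L2 ×ˢ Set.Ioo (-1 : ℝ) 1,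
          |f p * fderiv ℝ f p (1, 0, 0)| := by
    have hc1 : Continuous fun p : ℝ × ℝ => ∫ x in Set.Ioo 0 L1, f (x, p.1, p.2) ^ 2 :=
      contParam (w := fun (p : ℝ × ℝ) x => f (x, p.1, p.2) ^ 2) (by fun_prop) hL1.le
    have hc2 : Continuous fun p : ℝ × ℝ => ∫ x in Set.Ioo 0 L1,
        |f (x, p.1, p.2) * fderiv ℝ f (x, p.1, p.2) (1, 0, 0)| := by
      apply contParam (w := fun (p : ℝ × ℝ) x =>
        |f (x, p.1, p.2) * fderiv ℝ f (x, p.1, p.2) (1, 0, 0)|) ?_ hL1.le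
      exact (((hfc.mul hfx_cont).abs).comp (by fun_prop))
    have h1 : ∀ y : ℝ, Aa y = 1 / L1 * (∫ z in Set.Ioo (-1 : ℝ) 1,
          ∫ x in Set.Ioo 0 L1, f (x, y, z) ^ 2)
        + 2 * ∫ z in Set.Ioo (-1 : ℝ) 1, ∫ x in Set.Ioo 0 L1,
            |f (x, y, z) * fderiv ℝ f (x, y, z) (1, 0, 0)| := by
      intro y
      simp only [hAadef, hWdef]
      have hi1 : IntegrableOn (fun z : ℝ => ∫ x in Set.Ioo 0 L1, f (x, y, z) ^ 2)
          (Set.Ioo (-1 : ℝ) 1) := intOn1 (hc1.comp (Continuous.prodMk_right y))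
      have hi2 : IntegrableOn (fun z : ℝ => ∫ x in Set.Ioo 0 L1,
          |f (x, y, z) * fderiv ℝ f (x, y, z) (1, 0, 0)|)
          (Set.Ioo (-1 : ℝ) 1) := intOn1 (hc2.comp (Continuous.prodMk_right y))
      rw [integral_add (hi1.const_mul _) (hi2.const_mul _)]
      rw [integral_const_mul, integral_const_mul]
    have hc3 : Continuous fun y : ℝ => ∫ z in Set.Ioo (-1 : ℝ) 1,
        ∫ x in Set.Ioo 0 L1, f (x, y, z) ^ 2 :=
      contParam (w := fun y z => ∫ x in Set.Ioo 0 L1, f (x, y, z) ^ 2) hc1 hm1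
    have hc4 : Continuous fun y : ℝ => ∫ z in Set.Ioo (-1 : ℝ) 1,
        ∫ x in Set.Ioo 0 L1, |f (x, y, z) * fderiv ℝ f (x, y, z) (1, 0, 0)| :=
      contParam (w := fun y z => ∫ x in Set.Ioo 0 L1,
        |f (x, y, z) * fderiv ℝ f (x, y, z) (1, 0, 0)|) hc2 hm1
    rw [setIntegral_congr_fun measurableSet_Ioo (fun y (_ : y ∈ Set.Ioo 0 L2) => h1 y)]
    rw [integral_add (Integrable.const_mul (intOn1 hc3) _)
      (Integrable.const_mul (intOn1 hc4) _)]
    rw [integral_const_mul, integral_const_mul]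
    beta_reduce
    rw [reorder1 (w := fun p => f p ^ 2) (hfc.pow 2), reorder1 (w := fun p => |f p * fderiv ℝ f p (1, 0, 0)|) ((hfc.mul hfx_cont).abs)]
  have hABound : (∫ y in Set.Ioo 0 L2, 2 * Aa y)
      ≤ 2 * (1 / L1 * A) + 4 * (Real.sqrt A * Real.sqrt DA) := by
    rw [integral_const_mul, hsplitA]
    have hCSf : (∫ p in Set.Ioo 0 L1 ×ˢ Set.Ioo 0 L2 ×ˢ Set.Ioo (-1 : ℝ) 1,
        |f p * fderiv ℝ f p (1, 0, 0)|) ≤ Real.sqrt A * Real.sqrt DA := by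
      have h1 := myCS (volume.restrict
          (Set.Ioo 0 L1 ×ˢ Set.Ioo 0 L2 ×ˢ Set.Ioo (-1 : ℝ) 1))
        f (fun p => fderiv ℝ f p (1, 0, 0)) (intOn3 (hfc.pow 2))
        (intOn3 (hfx_cont.pow 2)) (intOn3 ((hfc.mul hfx_cont).abs))
      refine h1.trans ?_
      rw [← hAdef]
      apply mul_le_mul_of_nonneg_left ?_ (Real.sqrt_nonneg _)
      apply Real.sqrt_le_sqrt
      rw [hDAdef]
      exact integral_mono (intOn3 (hfx_cont.pow 2))
        (intOn3 ((hfx_cont.pow 2).add (hfy_cont.pow 2)))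
        (fun p => le_add_of_nonneg_right (sq_nonneg _))
    linarith
  have hBBound : Bb ≤ 1 / L2 * Bh + 2 * (Real.sqrt Bh * Real.sqrt DB) := by
    rw [hBbdef]
    have hCSh : (∫ p in Set.Ioo 0 L1 ×ˢ Set.Ioo 0 L2 ×ˢ Set.Ioo (-1 : ℝ) 1,
        |h p * fderiv ℝ h p (0, 1, 0)|) ≤ Real.sqrt Bh * Real.sqrt DB := by
      have h1 := myCS (volume.restrict
          (Set.Ioo 0 L1 ×ˢ Set.Ioo 0 L2 ×ˢ Set.Ioo (-1 : ℝ) 1))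
        h (fun p => fderiv ℝ h p (0, 1, 0)) (intOn3 (hhc.pow 2))
        (intOn3 (hhy_cont.pow 2)) (intOn3 ((hhc.mul hhy_cont).abs))
      refine h1.trans ?_
      rw [← hBhdef]
      apply mul_le_mul_of_nonneg_left ?_ (Real.sqrt_nonneg _)
      apply Real.sqrt_le_sqrt
      rw [hDBdef]
      exact integral_mono (intOn3 (hhy_cont.pow 2))
        (intOn3 ((hhx_cont.pow 2).add (hhy_cont.pow 2)))
        (fun p => le_add_of_nonneg_left (sq_nonneg _))
    linarith
  -- square-root bounds
  have ea : Real.sqrt (∫ y in Set.Ioo 0 L2, 2 * Aa y)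
      ≤ Real.sqrt (2 / L1 + 4) * (Real.sqrt (Real.sqrt A)
          * (Real.sqrt (Real.sqrt A) + Real.sqrt (Real.sqrt DA))) := by
    have hsa : Real.sqrt A ^ 2 = A := Real.sq_sqrt hAnn
    have h1 : Real.sqrt (Real.sqrt A) ^ 2 = Real.sqrt A := Real.sq_sqrt (Real.sqrt_nonneg _)
    have h2 : Real.sqrt (Real.sqrt DA) ^ 2 = Real.sqrt DA := Real.sq_sqrt (Real.sqrt_nonneg _)
    have key : (∫ y in Set.Ioo 0 L2, 2 * Aa y)
        ≤ (2 / L1 + 4) * (Real.sqrt A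
            * (Real.sqrt (Real.sqrt A) + Real.sqrt (Real.sqrt DA)) ^ 2) := by
      refine hABound.trans ?_
      have hgen := genIneq (c := 2 / L1) (k := 4) (by positivity) (by norm_num)
        (Real.sqrt_nonneg (Real.sqrt A)) (Real.sqrt_nonneg (Real.sqrt DA))
      rw [h1, h2, Real.mul_self_sqrt hAnn] at hgen
      have e : 2 * (1 / L1 * A) = 2 / L1 * A := by ring
      rw [e]
      exact hgen
    refine (Real.sqrt_le_sqrt key).trans ?_
    rw [Real.sqrt_mul (by positivity), Real.sqrt_mul (Real.sqrt_nonneg _),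
      Real.sqrt_sq (by positivity)]
  have eb : Real.sqrt Bb
      ≤ Real.sqrt (1 / L2 + 2) * (Real.sqrt (Real.sqrt Bh)
          * (Real.sqrt (Real.sqrt Bh) + Real.sqrt (Real.sqrt DB))) := by
    have hsb : Real.sqrt Bh ^ 2 = Bh := Real.sq_sqrt hBhnn
    have h1 : Real.sqrt (Real.sqrt Bh) ^ 2 = Real.sqrt Bh := Real.sq_sqrt (Real.sqrt_nonneg _)
    have h2 : Real.sqrt (Real.sqrt DB) ^ 2 = Real.sqrt DB := Real.sq_sqrt (Real.sqrt_nonneg _)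
    have key : Bb ≤ (1 / L2 + 2) * (Real.sqrt Bh
        * (Real.sqrt (Real.sqrt Bh) + Real.sqrt (Real.sqrt DB)) ^ 2) := by
      refine hBBound.trans ?_
      have hgen := genIneq (c := 1 / L2) (k := 2) (by positivity) (by norm_num)
        (Real.sqrt_nonneg (Real.sqrt Bh)) (Real.sqrt_nonneg (Real.sqrt DB))
      rw [h1, h2, Real.mul_self_sqrt hBhnn] at hgen
      have e : 2 * (Real.sqrt Bh * Real.sqrt DB) = 2 * (Real.sqrt Bh * Real.sqrt DB) := rfl
      exact hgen
    refine (Real.sqrt_le_sqrt key).trans ?_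
    rw [Real.sqrt_mul (by positivity), Real.sqrt_mul (Real.sqrt_nonneg _),
      Real.sqrt_sq (by positivity)]
  -- final assembly
  calc (∫ q in Set.Ioo 0 L1 ×ˢ Set.Ioo 0 L2,
        (∫ z in (-1 : ℝ)..1, f (q.1, q.2, z)) *
          (∫ z in (-1 : ℝ)..1, g (q.1, q.2, z) * h (q.1, q.2, z)))
      ≤ ∫ q in Set.Ioo 0 L1 ×ˢ Set.Ioo 0 L2, Φ q := hstep1
    _ = ∫ y in Set.Ioo 0 L2, ∫ x in Set.Ioo 0 L1, Φ (x, y) := hstep2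
    _ ≤ ∫ y in Set.Ioo 0 L2,
          Real.sqrt Bb * (Real.sqrt (2 * Aa y) * Real.sqrt (Kg y)) := hstep3
    _ = Real.sqrt Bb * ∫ y in Set.Ioo 0 L2,
          Real.sqrt (2 * Aa y) * Real.sqrt (Kg y) := integral_const_mul _ _
    _ ≤ Real.sqrt Bb * (Real.sqrt (∫ y in Set.Ioo 0 L2, 2 * Aa y)
          * Real.sqrt (∫ y in Set.Ioo 0 L2, Kg y)) :=
        mul_le_mul_of_nonneg_left hCSy (Real.sqrt_nonneg _)
    _ ≤ Real.sqrt (2 / L1 + 4) * Real.sqrt (1 / L2 + 2) * Real.sqrt (Real.sqrt A)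
          * (Real.sqrt (Real.sqrt A) + Real.sqrt (Real.sqrt DA)) * Real.sqrt Gg
          * Real.sqrt (Real.sqrt Bh)
          * (Real.sqrt (Real.sqrt Bh) + Real.sqrt (Real.sqrt DB)) := by
        rw [ekg]
        calc Real.sqrt Bb * (Real.sqrt (∫ y in Set.Ioo 0 L2, 2 * Aa y) * Real.sqrt Gg)
            ≤ (Real.sqrt (1 / L2 + 2) * (Real.sqrt (Real.sqrt Bh)
                * (Real.sqrt (Real.sqrt Bh) + Real.sqrt (Real.sqrt DB))))
              * ((Real.sqrt (2 / L1 + 4) * (Real.sqrt (Real.sqrt A)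
                * (Real.sqrt (Real.sqrt A) + Real.sqrt (Real.sqrt DA)))) * Real.sqrt Gg) := by
              apply mul_le_mul eb (mul_le_mul ea le_rfl (Real.sqrt_nonneg _)
                (by positivity)) (by positivity) (by positivity)
          _ = _ := by ring
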